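/- Let $\Phi$ be a real symmetric $m\times m$ matrix with operator norm $\lambda=\|\Phi\|>0$, and suppose every sign vector $\alpha\in\{\pm1\}^m$ achieving $\max_{\alpha,\beta}\alpha^T\Phi\beta=m\lambda$ (jointly with some $\beta$) lies in $\operatorname{Eig}(\lambda)\cup\operatorname{Eig}(-\lambda)$, with $\beta=\alpha$ if $\alpha\in\operatorname{Eig}(\lambda)$ and $\beta=-\alpha$ if $\alpha\in\operatorname{Eig}(-\lambda)$. If $k=\dim\operatorname{Eig}(\lambda)$ and $\ell=\dim\operatorname{Eig}(-\lambda)$, then the dimension of the affine span of the optimal points $\{(\alpha,\epsilon\alpha,\epsilon\alpha\alpha^T)\}$ is at most $k+\ell+\frac{k(k+1)}{2}+\frac{\ell(\ell+1)}{2}-1$. -/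

import Mathlib

open Matrix

noncomputable def Tmap (m : ℕ) (Φ : Matrix (Fin m) (Fin m) ℝ) :
    ((Fin m → ℝ) × (Fin m → ℝ) × Matrix (Fin m) (Fin m) ℝ) →ₗ[ℝ] ℝ where
  toFun p := ∑ x, ∑ y, Φ x y * p.2.2 x y
  map_add' p q := by
    simp [Matrix.add_apply, mul_add, Finset.sum_add_distrib]
  map_smul' c p := by
    simp [Matrix.smul_apply, Finset.mul_sum, smul_eq_mul, mul_left_comm]

theorem sq_mem_span {m k : ℕ} (e : Fin k → (Fin m → ℝ)) (c : Fin k → ℝ)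
    (W : Submodule ℝ (Matrix (Fin m) (Fin m) ℝ))
    (hW : ∀ i j, vecMulVec (e i) (e j) + vecMulVec (e j) (e i) ∈ W) :
    vecMulVec (∑ i, c i • e i) (∑ i, c i • e i) ∈ W := by
  have h : vecMulVec (∑ i, c i • e i) (∑ i, c i • e i)
      = (1/2 : ℝ) • ∑ i, ∑ j, (c i * c j) •
          (vecMulVec (e i) (e j) + vecMulVec (e j) (e i)) := by
    ext x y
    simp only [vecMulVec_apply, Matrix.smul_apply, Matrix.sum_apply,
      Matrix.add_apply, Finset.sum_apply, smul_eq_mul, Pi.smul_apply]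
    rw [Finset.sum_mul_sum]
    have hswap : ∑ i, ∑ j, (c i * c j) * (e j x * e i y)
        = ∑ i, ∑ j, (c i * c j) * (e i x * e j y) := by
      rw [Finset.sum_comm]
      exact Finset.sum_congr rfl fun i _ => Finset.sum_congr rfl fun j _ => by ring
    have expand : ∑ i, ∑ j, (c i * c j) * (e i x * e j y + e j x * e i y)
        = (∑ i, ∑ j, (c i * c j) * (e i x * e j y))
          + ∑ i, ∑ j, (c i * c j) * (e j x * e i y) := by
      simp [mul_add, Finset.sum_add_distrib]
    calc ∑ i, ∑ j, (c i • e i) x * ((c j • e j) y)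
        = ∑ i, ∑ j, (c i * c j) * (e i x * e j y) := by
          exact Finset.sum_congr rfl fun i _ => Finset.sum_congr rfl fun j _ => by
            simp [Pi.smul_apply, smul_eq_mul]; ring
      _ = 1/2 * ∑ i, ∑ j, (c i * c j) * (e i x * e j y + e j x * e i y) := by
          rw [expand, hswap]; ring
  rw [h]
  exact Submodule.smul_mem _ _ (Submodule.sum_mem _ fun i _ => Submodule.sum_mem _ fun j _ =>
    Submodule.smul_mem _ _ (hW i j))

/-- Dimension bound for the face of optimal classical strategies of an
NLC-type XOR game: if every optimal sign pair `(α, β)` satisfies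
`α ∈ Eig(λ), β = α` or `α ∈ Eig(-λ), β = -α`, then the affine span of the
optimal points `(α, β, αβᵀ)` has dimension at most
`k + ℓ + k(k+1)/2 + ℓ(ℓ+1)/2 - 1`, where `k = dim Eig(λ)`,
`ℓ = dim Eig(-λ)`. -/
theorem stmt15 (m : ℕ) (Φ : Matrix (Fin m) (Fin m) ℝ) (hΦ : Φ.IsSymm)
    (lam : ℝ) (hlam : lam = ‖Matrix.toEuclideanCLM (𝕜 := ℝ) Φ‖) (hpos : 0 < lam)
    (hopt : ∀ α β : Fin m → ℝ,
      (∀ x, α x = 1 ∨ α x = -1) → (∀ y, β y = 1 ∨ β y = -1) →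
      (∑ x, ∑ y, α x * Φ x y * β y) = (m : ℝ) * lam →
      (Φ.mulVec α = lam • α ∧ β = α) ∨ (Φ.mulVec α = (-lam) • α ∧ β = -α)) :
    Module.finrank ℝ
      (affineSpan ℝ {p : (Fin m → ℝ) × (Fin m → ℝ) × Matrix (Fin m) (Fin m) ℝ |
        ∃ α β : Fin m → ℝ,
          (∀ x, α x = 1 ∨ α x = -1) ∧ (∀ y, β y = 1 ∨ β y = -1) ∧
          (∑ x, ∑ y, α x * Φ x y * β y) = (m : ℝ) * lam ∧
          p = (α, β, vecMulVec α β)}).direction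
      ≤ Module.finrank ℝ (Module.End.eigenspace (Matrix.toLin' Φ) lam)
        + Module.finrank ℝ (Module.End.eigenspace (Matrix.toLin' Φ) (-lam))
        + Module.finrank ℝ (Module.End.eigenspace (Matrix.toLin' Φ) lam) *
            (Module.finrank ℝ (Module.End.eigenspace (Matrix.toLin' Φ) lam) + 1) / 2
        + Module.finrank ℝ (Module.End.eigenspace (Matrix.toLin' Φ) (-lam)) *
            (Module.finrank ℝ (Module.End.eigenspace (Matrix.toLin' Φ) (-lam)) + 1) / 2
        - 1 := by
  classical
  rw [direction_affineSpan]
  set S : Set ((Fin m → ℝ) × (Fin m → ℝ) × Matrix (Fin m) (Fin m) ℝ) :=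
    {p : (Fin m → ℝ) × (Fin m → ℝ) × Matrix (Fin m) (Fin m) ℝ |
        ∃ α β : Fin m → ℝ,
          (∀ x, α x = 1 ∨ α x = -1) ∧ (∀ y, β y = 1 ∨ β y = -1) ∧
          (∑ x, ∑ y, α x * Φ x y * β y) = (m : ℝ) * lam ∧
          p = (α, β, vecMulVec α β)} with hSdef
  set Ep := Module.End.eigenspace (Matrix.toLin' Φ) lam with hEp
  set Em := Module.End.eigenspace (Matrix.toLin' Φ) (-lam) with hEm
  rcases Nat.eq_zero_or_pos m with hm | hm
  · subst hm
    have hle0 : Module.finrank ℝ (vectorSpan ℝ S)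
        ≤ Module.finrank ℝ ((Fin 0 → ℝ) × (Fin 0 → ℝ) × Matrix (Fin 0) (Fin 0) ℝ) :=
      Submodule.finrank_le _
    have h0 : Module.finrank ℝ ((Fin 0 → ℝ) × (Fin 0 → ℝ) × Matrix (Fin 0) (Fin 0) ℝ) = 0 := by
      simp [Module.finrank_prod, Module.finrank_matrix]
    rw [h0, Nat.le_zero] at hle0
    rw [hle0]
    exact Nat.zero_le _
  rcases Set.eq_empty_or_nonempty S with hS | ⟨p₀, hp₀⟩
  · rw [hS, vectorSpan_empty, finrank_bot]
    exact Nat.zero_le _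
  set k := Module.finrank ℝ Ep with hk
  set l := Module.finrank ℝ Em with hl
  let bp : Module.Basis (Fin k) ℝ Ep := Module.finBasis ℝ Ep
  let bq : Module.Basis (Fin l) ℝ Em := Module.finBasis ℝ Em
  let ep : Fin k → (Fin m → ℝ) := fun i => (bp i : Fin m → ℝ)
  let fq : Fin l → (Fin m → ℝ) := fun j => (bq j : Fin m → ℝ)
  have hrepp : ∀ α (hα : α ∈ Ep), ∃ c : Fin k → ℝ, α = ∑ i, c i • ep i := by
    intro α hα
    refine ⟨fun i => bp.repr ⟨α, hα⟩ i, ?_⟩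
    have h := bp.sum_repr ⟨α, hα⟩
    calc α = ((⟨α, hα⟩ : Ep) : Fin m → ℝ) := rfl
      _ = ((∑ i, bp.repr ⟨α, hα⟩ i • bp i : Ep) : Fin m → ℝ) := by rw [h]
      _ = ∑ i, bp.repr ⟨α, hα⟩ i • ep i := by
          rw [Submodule.coe_sum]; simp [ep]
  have hrepq : ∀ α (hα : α ∈ Em), ∃ c : Fin l → ℝ, α = ∑ j, c j • fq j := by
    intro α hα
    refine ⟨fun j => bq.repr ⟨α, hα⟩ j, ?_⟩
    have h := bq.sum_repr ⟨α, hα⟩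
    calc α = ((⟨α, hα⟩ : Em) : Fin m → ℝ) := rfl
      _ = ((∑ j, bq.repr ⟨α, hα⟩ j • bq j : Em) : Fin m → ℝ) := by rw [h]
      _ = ∑ j, bq.repr ⟨α, hα⟩ j • fq j := by
          rw [Submodule.coe_sum]; simp [fq]
  let Es : Sym2 (Fin k) → Matrix (Fin m) (Fin m) ℝ :=
    Sym2.lift ⟨fun i j => vecMulVec (ep i) (ep j) + vecMulVec (ep j) (ep i),
      fun i j => add_comm _ _⟩
  let Fs : Sym2 (Fin l) → Matrix (Fin m) (Fin m) ℝ :=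
    Sym2.lift ⟨fun i j => vecMulVec (fq i) (fq j) + vecMulVec (fq j) (fq i),
      fun i j => add_comm _ _⟩
  let g : (Fin k ⊕ Fin l) ⊕ (Sym2 (Fin k) ⊕ Sym2 (Fin l)) →
      (Fin m → ℝ) × (Fin m → ℝ) × Matrix (Fin m) (Fin m) ℝ :=
    Sum.elim (Sum.elim (fun i => (ep i, ep i, 0)) (fun j => (fq j, -fq j, 0)))
      (Sum.elim (fun s => (0, 0, Es s)) (fun s => (0, 0, Fs s)))
  set W := Submodule.span ℝ (Set.range g) with hWdef
  -- matrix-part inclusion helpers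
  have hmat : ∀ M : Matrix (Fin m) (Fin m) ℝ,
      M ∈ Submodule.span ℝ (Set.range Es) ⊔ Submodule.span ℝ (Set.range Fs) →
      ((0, 0, M) : (Fin m → ℝ) × (Fin m → ℝ) × Matrix (Fin m) (Fin m) ℝ) ∈ W := by
    intro M hM
    let ι₃ : Matrix (Fin m) (Fin m) ℝ →ₗ[ℝ]
        (Fin m → ℝ) × (Fin m → ℝ) × Matrix (Fin m) (Fin m) ℝ :=
      (LinearMap.inr ℝ (Fin m → ℝ) ((Fin m → ℝ) × Matrix (Fin m) (Fin m) ℝ)).comp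
        (LinearMap.inr ℝ (Fin m → ℝ) (Matrix (Fin m) (Fin m) ℝ))
    have hle : Submodule.span ℝ (Set.range Es) ⊔ Submodule.span ℝ (Set.range Fs)
        ≤ W.comap ι₃ := by
      refine sup_le (Submodule.span_le.mpr ?_) (Submodule.span_le.mpr ?_)
      · rintro _ ⟨s, rfl⟩
        exact Submodule.subset_span ⟨Sum.inr (Sum.inl s), rfl⟩
      · rintro _ ⟨s, rfl⟩
        exact Submodule.subset_span ⟨Sum.inr (Sum.inr s), rfl⟩
    exact hle hM
  have hmemW : ∀ p ∈ S, p ∈ W := by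
    rintro p ⟨α, β, hα1, hβ1, hsum, rfl⟩
    rcases hopt α β hα1 hβ1 hsum with ⟨heig, rfl⟩ | ⟨heig, rfl⟩
    · have hαE : β ∈ Ep := by
        rw [hEp, Module.End.mem_eigenspace_iff, Matrix.toLin'_apply]
        exact heig
      obtain ⟨c, hc⟩ := hrepp β hαE
      have h1 : ((β, β, 0) : (Fin m → ℝ) × (Fin m → ℝ) × Matrix (Fin m) (Fin m) ℝ) ∈ W := by
        have hsum' : ((β, β, (0 : Matrix (Fin m) (Fin m) ℝ)) :
            (Fin m → ℝ) × (Fin m → ℝ) × Matrix (Fin m) (Fin m) ℝ)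
            = ∑ i, c i • (ep i, ep i, (0 : Matrix (Fin m) (Fin m) ℝ)) := by
          rw [Prod.ext_iff, Prod.ext_iff]
          refine ⟨?_, ?_, ?_⟩ <;>
            simp [Prod.fst_sum, Prod.snd_sum, ← hc, Finset.sum_const_zero]
        rw [hsum']
        exact Submodule.sum_mem _ fun i _ => Submodule.smul_mem _ _
          (Submodule.subset_span ⟨Sum.inl (Sum.inl i), rfl⟩)
      have h2 : ((0, 0, vecMulVec β β) :
          (Fin m → ℝ) × (Fin m → ℝ) × Matrix (Fin m) (Fin m) ℝ) ∈ W := by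
        refine hmat _ (Submodule.mem_sup_left ?_)
        rw [hc]
        refine sq_mem_span ep c _ fun i j => Submodule.subset_span ⟨Sym2.mk i j, ?_⟩
        simp [Es, Sym2.lift_mk]
      have : ((β, β, vecMulVec β β) :
          (Fin m → ℝ) × (Fin m → ℝ) × Matrix (Fin m) (Fin m) ℝ)
          = (β, β, 0) + (0, 0, vecMulVec β β) := by
        simp [Prod.ext_iff]
      rw [this]
      exact Submodule.add_mem _ h1 h2
    · have hαE : α ∈ Em := by
        rw [hEm, Module.End.mem_eigenspace_iff, Matrix.toLin'_apply]
        exact heig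
      obtain ⟨c, hc⟩ := hrepq α hαE
      have hneg : vecMulVec α (-α) = -(vecMulVec α α) := by
        ext x y
        simp [vecMulVec_apply, mul_neg]
      have h1 : ((α, -α, 0) : (Fin m → ℝ) × (Fin m → ℝ) × Matrix (Fin m) (Fin m) ℝ) ∈ W := by
        have hsum' : ((α, -α, (0 : Matrix (Fin m) (Fin m) ℝ)) :
            (Fin m → ℝ) × (Fin m → ℝ) × Matrix (Fin m) (Fin m) ℝ)
            = ∑ j, c j • (fq j, -fq j, (0 : Matrix (Fin m) (Fin m) ℝ)) := by
          rw [Prod.ext_iff, Prod.ext_iff]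
          refine ⟨?_, ?_, ?_⟩ <;>
            simp [Prod.fst_sum, Prod.snd_sum, ← hc, Finset.sum_const_zero, Finset.sum_neg_distrib]
        rw [hsum']
        exact Submodule.sum_mem _ fun j _ => Submodule.smul_mem _ _
          (Submodule.subset_span ⟨Sum.inl (Sum.inr j), rfl⟩)
      have h2 : ((0, 0, vecMulVec α (-α)) :
          (Fin m → ℝ) × (Fin m → ℝ) × Matrix (Fin m) (Fin m) ℝ) ∈ W := by
        rw [hneg]
        refine hmat _ (Submodule.mem_sup_right (Submodule.neg_mem _ ?_))
        rw [hc]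
        refine sq_mem_span fq c _ fun i j => Submodule.subset_span ⟨Sym2.mk i j, ?_⟩
        simp [Fs, Sym2.lift_mk]
      have : ((α, -α, vecMulVec α (-α)) :
          (Fin m → ℝ) × (Fin m → ℝ) × Matrix (Fin m) (Fin m) ℝ)
          = (α, -α, 0) + (0, 0, vecMulVec α (-α)) := by
        simp [Prod.ext_iff]
      rw [this]
      exact Submodule.add_mem _ h1 h2
  have hT : ∀ p ∈ S, Tmap m Φ p = (m : ℝ) * lam := by
    rintro p ⟨α, β, hα1, hβ1, hsum, rfl⟩
    show (∑ x, ∑ y, Φ x y * (vecMulVec α β) x y) = (m : ℝ) * lam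
    rw [← hsum]
    exact Finset.sum_congr rfl fun x _ => Finset.sum_congr rfl fun y _ => by
      simp [vecMulVec_apply]; ring
  have hne0 : (m : ℝ) * lam ≠ 0 :=
    mul_ne_zero (Nat.cast_ne_zero.mpr hm.ne') hpos.ne'
  have hle : vectorSpan ℝ S ≤ W ⊓ LinearMap.ker (Tmap m Φ) := by
    rw [vectorSpan_def]
    refine Submodule.span_le.mpr ?_
    rintro v hv
    obtain ⟨p, hp, q, hq, rfl⟩ := hv
    refine Submodule.mem_inf.mpr ⟨?_, ?_⟩
    · exact Submodule.sub_mem _ (hmemW p hp) (hmemW q hq)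
    · rw [LinearMap.mem_ker]
      show Tmap m Φ (p - q) = 0
      rw [map_sub, hT p hp, hT q hq, sub_self]
  have hlt : W ⊓ LinearMap.ker (Tmap m Φ) < W := by
    refine inf_le_left.lt_of_ne fun hEq => ?_
    have hp₀W := hmemW p₀ hp₀
    rw [← hEq] at hp₀W
    have := LinearMap.mem_ker.mp hp₀W.2
    rw [hT p₀ hp₀] at this
    exact hne0 this
  have h1 : Module.finrank ℝ (vectorSpan ℝ S)
      ≤ Module.finrank ℝ (W ⊓ LinearMap.ker (Tmap m Φ) : Submodule ℝ _) :=
    Submodule.finrank_mono hle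
  have h2 : Module.finrank ℝ (W ⊓ LinearMap.ker (Tmap m Φ) : Submodule ℝ _)
      < Module.finrank ℝ W :=
    Submodule.finrank_lt_finrank_of_lt hlt
  have hsym : ∀ n : ℕ, Fintype.card (Sym2 (Fin n)) = n * (n + 1) / 2 := by
    intro n
    rw [Sym2.card, Fintype.card_fin, Nat.choose_two_right]
    congr 1
    rw [Nat.add_sub_cancel, Nat.mul_comm]
  have h3 : Module.finrank ℝ W ≤ k + l + k * (k + 1) / 2 + l * (l + 1) / 2 := by
    have hcard := finrank_range_le_card (R := ℝ) g
    rw [Set.finrank] at hcard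
    refine le_trans hcard ?_
    simp only [Fintype.card_sum, Fintype.card_fin, hsym]
    omega
  calc Module.finrank ℝ (vectorSpan ℝ S)
      ≤ Module.finrank ℝ W - 1 := Nat.le_sub_one_of_lt (h1.trans_lt h2)
    _ ≤ k + l + k * (k + 1) / 2 + l * (l + 1) / 2 - 1 := Nat.sub_le_sub_right h3 1
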